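/- Let L ∈ ℝ^{n×n} and z ∈ ℝⁿ satisfy: L𝟏 = 0, Lᵀz = 0, 𝟏ᵀz = 1, ker(L) = span{𝟏}, ker(Lᵀ) = span{z}, and ker((Lᵀ)²) = ker(Lᵀ) (i.e., 0 is a simple semisimple eigenvalue). Then ξ (Lᵀ − ξI)⁻¹ converges to −z 𝟏ᵀ as ξ → 0 from the left (ξ < 0). -/

import Mathlib

open Matrix

/-- If `0` is a simple semisimple eigenvalue of the Laplacian `L`, with `L 𝟏 = 0`,
`Lᵀ z = 0`, `𝟏ᵀ z = 1`, `ker L = span{𝟏}` and `ker Lᵀ = span{z}`, then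
`ξ (Lᵀ - ξ I)⁻¹ → -z 𝟏ᵀ` as `ξ → 0⁻`. -/
theorem resolvent_limit_at_zero {n : ℕ}
    (L : Matrix (Fin n) (Fin n) ℝ) (z : Fin n → ℝ)
    (hL1 : L *ᵥ (fun _ => (1 : ℝ)) = 0)
    (hz : Lᵀ *ᵥ z = 0) (hz1 : (fun _ => (1 : ℝ)) ⬝ᵥ z = 1)
    (hkerL : ∀ v : Fin n → ℝ, L *ᵥ v = 0 ↔ ∃ c : ℝ, v = c • (fun _ => (1 : ℝ)))
    (hkerLT : ∀ v : Fin n → ℝ, Lᵀ *ᵥ v = 0 ↔ ∃ c : ℝ, v = c • z)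
    (hsemi : ∀ v : Fin n → ℝ, Lᵀ *ᵥ (Lᵀ *ᵥ v) = 0 → Lᵀ *ᵥ v = 0) :
    Filter.Tendsto
      (fun ξ : ℝ => ξ • (Lᵀ - ξ • (1 : Matrix (Fin n) (Fin n) ℝ))⁻¹)
      (nhdsWithin 0 (Set.Iio 0))
      (nhds (-(Matrix.vecMulVec z (fun _ => (1 : ℝ))))) := by
  set M : Matrix (Fin n) (Fin n) ℝ := Lᵀ with hM
  set P : Matrix (Fin n) (Fin n) ℝ := vecMulVec z (fun _ => (1 : ℝ)) with hPdef
  -- basic algebraic identities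
  have hMP : M * P = 0 := by
    ext i j
    have := congrFun hz i
    simp only [mulVec, dotProduct] at this
    simp [Matrix.mul_apply, vecMulVec_apply, hPdef, ← Finset.sum_mul, this]
  have hPM : P * M = 0 := by
    ext i j
    have := congrFun hL1 j
    simp only [mulVec, dotProduct, mul_one] at this
    simp only [Matrix.mul_apply, vecMulVec_apply, Matrix.zero_apply, one_mul, mul_one,
      hPdef, ← Finset.mul_sum, hM, transpose_apply]
    rw [this]; simp
  have hPP : P * P = P := by
    ext i j
    have : ∑ k, z k = 1 := by simpa [dotProduct] using hz1
    simp only [Matrix.mul_apply, vecMulVec_apply, mul_one, one_mul, hPdef]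
    rw [← Finset.mul_sum, this, mul_one]
  -- M + P is invertible
  have hdet0 : (M + P).det ≠ 0 := by
    intro hd
    obtain ⟨v, hv0, hv⟩ := (Matrix.exists_mulVec_eq_zero_iff).2 hd
    have hPv : P *ᵥ v = 0 := by
      have h := congrArg (fun w => P *ᵥ w) hv
      simp only [Matrix.mulVec_mulVec, Matrix.mulVec_zero] at h
      rw [Matrix.mul_add, hPM, hPP, zero_add] at h
      exact h
    have hMv : M *ᵥ v = 0 := by
      have : M *ᵥ v + P *ᵥ v = 0 := by rw [← Matrix.add_mulVec, hv]
      simpa [hPv] using this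
    obtain ⟨c, rfl⟩ := (hkerLT v).1 hMv
    have hPz : P *ᵥ z = z := by
      ext i
      have : ∑ k, z k = 1 := by simpa [dotProduct] using hz1
      simp only [mulVec, dotProduct, vecMulVec_apply, hPdef, mul_one]
      rw [← Finset.mul_sum, this, mul_one]
    rw [Matrix.mulVec_smul, hPz] at hPv
    exact hv0 (by rw [hPv])
  -- the perturbed family
  set f : ℝ → Matrix (Fin n) (Fin n) ℝ := fun ξ => M + P - ξ • 1 with hf
  have hf0 : f 0 = M + P := by simp [hf]
  have hfcont : Continuous f := by
    apply Continuous.sub continuous_const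
    exact continuous_id.smul continuous_const
  have hdetcont : Continuous fun ξ => (f ξ).det := hfcont.matrix_det
  -- eventually det (f ξ) ≠ 0 and ξ < 0
  have hev : ∀ᶠ ξ in nhdsWithin 0 (Set.Iio 0), (f ξ).det ≠ 0 ∧ ξ < 0 := by
    have h1 : ∀ᶠ ξ in nhdsWithin 0 (Set.Iio 0), (f ξ).det ≠ 0 := by
      apply Filter.Eventually.filter_mono nhdsWithin_le_nhds
      have : ContinuousAt (fun ξ => (f ξ).det) 0 := hdetcont.continuousAt
      have h0 : (f 0).det ≠ 0 := by rw [hf0]; exact hdet0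
      exact this.eventually_ne h0
    have h2 : ∀ᶠ ξ : ℝ in nhdsWithin 0 (Set.Iio 0), ξ < 0 :=
      eventually_mem_nhdsWithin.mono fun x hx => hx
    exact h1.and h2
  -- eventual formula for the resolvent
  have heq : ∀ᶠ ξ in nhdsWithin 0 (Set.Iio 0),
      ξ • (Lᵀ - ξ • (1 : Matrix (Fin n) (Fin n) ℝ))⁻¹
        = ξ • (f ξ)⁻¹ - (1 - ξ)⁻¹ • P := by
    filter_upwards [hev] with ξ ⟨hdet, hlt⟩
    have hξ : ξ ≠ 0 := ne_of_lt hlt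
    have h1ξ : (1 : ℝ) - ξ ≠ 0 := by linarith
    have hBu : IsUnit (f ξ).det := isUnit_iff_ne_zero.2 hdet
    have hBP : f ξ * P = (1 - ξ) • P := by
      rw [hf]
      simp only [Matrix.sub_mul, Matrix.add_mul, hMP, hPP, Matrix.smul_mul,
        Matrix.one_mul, zero_add, sub_smul, one_smul]
    have hPB : P * f ξ = (1 - ξ) • P := by
      rw [hf]
      simp only [Matrix.mul_sub, Matrix.mul_add, hPM, hPP, Matrix.mul_smul,
        Matrix.mul_one, zero_add, sub_smul, one_smul]
    have hPBinv : P * (f ξ)⁻¹ = (1 - ξ)⁻¹ • P := by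
      have := congrArg (fun A => (1 - ξ)⁻¹ • (A * (f ξ)⁻¹)) hPB
      simp only [Matrix.mul_assoc, Matrix.mul_nonsing_inv _ hBu, Matrix.mul_one,
        Matrix.smul_mul] at this
      rw [smul_smul, inv_mul_cancel₀ h1ξ, one_smul] at this
      exact this.symm
    have hright : (Lᵀ - ξ • (1 : Matrix (Fin n) (Fin n) ℝ)) *
        ((f ξ)⁻¹ - (ξ * (1 - ξ))⁻¹ • P) = 1 := by
      have hMsub : Lᵀ - ξ • (1 : Matrix (Fin n) (Fin n) ℝ) = f ξ - P := by
        rw [hf, ← hM]; ring_nf; abel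
      rw [hMsub]
      rw [Matrix.sub_mul, Matrix.mul_sub, Matrix.mul_sub,
        Matrix.mul_nonsing_inv _ hBu, Matrix.mul_smul, hBP, hPBinv, Matrix.mul_smul, hPP]
      rw [smul_smul, mul_comm ((ξ * (1 - ξ))⁻¹) (1 - ξ)]
      have e1 : (1 - ξ) * (ξ * (1 - ξ))⁻¹ = ξ⁻¹ := by
        field_simp
      have e2 : (ξ * (1 - ξ))⁻¹ = ξ⁻¹ * (1 - ξ)⁻¹ := by
        rw [mul_inv]
      rw [e1, e2]
      have : (1 : Matrix (Fin n) (Fin n) ℝ) - ξ⁻¹ • P - ((1 - ξ)⁻¹ • P - (ξ⁻¹ * (1 - ξ)⁻¹) • P)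
          = 1 - (ξ⁻¹ + (1 - ξ)⁻¹ - ξ⁻¹ * (1 - ξ)⁻¹) • P := by
        simp only [add_smul, sub_smul]; abel
      rw [this]
      have hco : ξ⁻¹ + (1 - ξ)⁻¹ - ξ⁻¹ * (1 - ξ)⁻¹ = 0 := by
        field_simp
        ring
      rw [hco, zero_smul, sub_zero]
    rw [Matrix.inv_eq_right_inv hright, smul_sub, smul_smul,
      mul_inv, ← mul_assoc, mul_inv_cancel₀ hξ, one_mul]
  -- compute the limit of the right-hand side
  have hlim : Filter.Tendsto (fun ξ : ℝ => ξ • (f ξ)⁻¹ - (1 - ξ)⁻¹ • P)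
      (nhdsWithin 0 (Set.Iio 0)) (nhds (-(Matrix.vecMulVec z (fun _ => (1 : ℝ))))) := by
    have hinv : ContinuousAt (fun ξ => (f ξ)⁻¹) 0 := by
      apply ContinuousAt.comp _ hfcont.continuousAt
      apply continuousAt_matrix_inv
      rw [hf0]
      rw [Ring.inverse_eq_inv']
      exact continuousAt_inv₀ hdet0
    have h1 : Filter.Tendsto (fun ξ : ℝ => ξ • (f ξ)⁻¹) (nhdsWithin 0 (Set.Iio 0))
        (nhds (0 : Matrix (Fin n) (Fin n) ℝ)) := by
      have := (Filter.tendsto_id.smul hinv.tendsto).mono_left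
        (nhdsWithin_le_nhds (s := Set.Iio (0:ℝ)))
      simpa using this
    have h2 : Filter.Tendsto (fun ξ : ℝ => (1 - ξ)⁻¹ • P) (nhdsWithin 0 (Set.Iio 0))
        (nhds P) := by
      have hc : ContinuousAt (fun ξ : ℝ => (1 - ξ)⁻¹) 0 := by
        apply ContinuousAt.inv₀ (by fun_prop)
        norm_num
      have := (hc.tendsto.smul_const P).mono_left
        (nhdsWithin_le_nhds (s := Set.Iio (0:ℝ)))
      simpa using this
    have := h1.sub h2
    simpa [hPdef] using this
  exact Filter.Tendsto.congr' (heq.mono fun ξ h => h.symm) hlim
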